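/- Let p > 1. Then lim_{n→∞} n^{−1/p} ‖T_n‖_p = 2^{1/p} [(2^p − 1) ζ(p)]^{1/p}, and consequently for every n ≥ 1 one has 2 ≤ n^{−1/p} ‖T_n‖_p < 2^{1/p} [(2^p − 1) ζ(p)]^{1/p}. -/

import Mathlib

open Finset Real Filter

/-- The n×n Cauchy–Toeplitz matrix `T_n = [2/(1+2(i-j))]`. -/
noncomputable def cauchyToeplitz (n : ℕ) : Matrix (Fin n) (Fin n) ℝ :=
  fun i j => 2 / (1 + 2 * (((i : ℕ) : ℝ) - ((j : ℕ) : ℝ)))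

/-- The ℓ_p norm of `T_n`: `(∑_{i,j} |a_{ij}|^p)^(1/p)`. -/
noncomputable def lpNorm (n : ℕ) (p : ℝ) : ℝ :=
  (∑ i : Fin n, ∑ j : Fin n, |cauchyToeplitz n i j| ^ p) ^ (1 / p)

/-- The ℓ_{p,q} norm of `T_n`: `(∑_j (∑_i |a_{ij}|^p)^(q/p))^(1/q)`. -/
noncomputable def lpqNorm (n : ℕ) (p q : ℝ) : ℝ :=
  (∑ j : Fin n, (∑ i : Fin n, |cauchyToeplitz n i j| ^ p) ^ (q / p)) ^ (1 / q)

/-- The Riemann zeta function at a real argument (real-valued for real `p > 1`). -/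
noncomputable def zetaR (p : ℝ) : ℝ := (riemannZeta p).re

/-! ### Auxiliary definitions and lemmas -/

noncomputable def cfun (p : ℝ) (d : ℕ) : ℝ := 2 ^ p / (2 * (d : ℝ) + 1) ^ p

def idx (i j : ℕ) : ℕ := if j ≤ i then i - j else j - i - 1

noncomputable def tfun (p : ℝ) (n : ℕ) : ℝ := ∑ d ∈ Finset.range n, cfun p d

noncomputable def Sfun (p : ℝ) (n : ℕ) : ℝ :=
  ∑ i ∈ Finset.range n, ∑ j ∈ Finset.range n, cfun p (idx i j)

lemma cfun_pos {p : ℝ} (d : ℕ) : 0 < cfun p d := by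
  have h : (0:ℝ) < 2 * (d:ℝ) + 1 := by positivity
  exact div_pos (Real.rpow_pos_of_pos two_pos p) (Real.rpow_pos_of_pos h p)

lemma cfun_zero (p : ℝ) : cfun p 0 = 2 ^ p := by
  simp [cfun]

lemma summable_cfun {p : ℝ} (hp : 1 < p) : Summable (cfun p) := by
  have hbase : Summable (fun n : ℕ => 1 / ((n:ℝ)) ^ p) :=
    (Real.summable_one_div_nat_rpow).mpr hp
  have hshift : Summable (fun n : ℕ => 1 / ((n:ℝ) + 1) ^ p) := by
    have := (summable_nat_add_iff 1).mpr hbase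
    simpa using this
  refine Summable.of_nonneg_of_le (fun d => (cfun_pos d).le)
    (fun d => ?_) (hshift.mul_left (2 ^ p))
  unfold cfun
  rw [div_eq_mul_one_div]
  refine mul_le_mul_of_nonneg_left ?_ (Real.rpow_pos_of_pos two_pos p).le
  apply one_div_le_one_div_of_le
  · positivity
  · apply Real.rpow_le_rpow (by positivity) (by linarith [Nat.cast_nonneg (α := ℝ) d]) (by linarith)

lemma zetaR_eq {p : ℝ} (hp : 1 < p) :
    zetaR p = ∑' n : ℕ, 1 / ((n : ℝ)) ^ p := by
  have h : riemannZeta p = ∑' n : ℕ, 1 / ((n : ℂ)) ^ (p : ℂ) :=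
    zeta_eq_tsum_one_div_nat_cpow (by simpa using hp)
  have h2 : ∀ n : ℕ, (1 / ((n : ℂ)) ^ (p : ℂ)) = ((1 / ((n : ℝ)) ^ p : ℝ) : ℂ) := by
    intro n
    rw [Complex.ofReal_div, Complex.ofReal_one, Complex.ofReal_cpow (Nat.cast_nonneg n)]
    norm_num
  rw [zetaR, h, tsum_congr h2, ← Complex.ofReal_tsum, Complex.ofReal_re]

lemma tsum_cfun_eq {p : ℝ} (hp : 1 < p) :
    ∑' d, cfun p d = (2 ^ p - 1) * zetaR p := by
  have hp0 : (0:ℝ) < p := by linarith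
  set f : ℕ → ℝ := fun n => 1 / ((n : ℝ)) ^ p with hf
  have hfs : Summable f := (Real.summable_one_div_nat_rpow).mpr hp
  have heven_eq : ∀ k : ℕ, f (2 * k) = (2 ^ p)⁻¹ * f k := by
    intro k
    simp only [hf]
    push_cast
    rw [Real.mul_rpow (by norm_num) (Nat.cast_nonneg k)]
    field_simp
  have heven : Summable (fun k => f (2 * k)) := by
    rw [funext heven_eq]; exact hfs.mul_left _
  have hodd_eq : ∀ k : ℕ, f (2 * k + 1) = (2 ^ p)⁻¹ * cfun p k := by
    intro k
    have h2p : (2:ℝ) ^ p ≠ 0 := (Real.rpow_pos_of_pos two_pos p).ne'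
    simp only [hf, cfun]
    push_cast
    field_simp
  have hodd : Summable (fun k => f (2 * k + 1)) := by
    rw [funext hodd_eq]; exact (summable_cfun hp).mul_left _
  have hsplit : (∑' k, f (2*k)) + ∑' k, f (2*k+1) = ∑' k, f k :=
    tsum_even_add_odd heven hodd
  have h2p : (2:ℝ) ^ p ≠ 0 := (Real.rpow_pos_of_pos two_pos p).ne'
  have hE : (∑' k, f (2*k)) = (2 ^ p)⁻¹ * ∑' k, f k := by
    rw [funext heven_eq, tsum_mul_left]
  have hO : (∑' k, f (2*k+1)) = (2 ^ p)⁻¹ * ∑' d, cfun p d := by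
    rw [funext hodd_eq, tsum_mul_left]
  rw [zetaR_eq hp]
  have := hsplit
  rw [hE, hO] at this
  have hZ : (∑' n : ℕ, 1 / ((n : ℝ)) ^ p) = ∑' k, f k := rfl
  rw [hZ]
  field_simp at this ⊢
  linarith

lemma abs_entry {n : ℕ} (i j : Fin n) :
    |cauchyToeplitz n i j| = 2 / (2 * ((idx i j : ℕ) : ℝ) + 1) := by
  unfold cauchyToeplitz idx
  by_cases h : (j : ℕ) ≤ (i : ℕ)
  · rw [if_pos h]
    have hd : ((i : ℕ) : ℝ) - ((j : ℕ) : ℝ) = (((i : ℕ) - (j : ℕ) : ℕ) : ℝ) := by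
      push_cast [Nat.cast_sub h]; ring
    rw [hd]
    set d : ℝ := (((i : ℕ) - (j : ℕ) : ℕ) : ℝ) with hdd
    have hd0 : 0 ≤ d := Nat.cast_nonneg _
    rw [abs_of_pos (by positivity)]
    ring_nf
  · rw [if_neg h]
    push_neg at h
    have he : 1 ≤ (j : ℕ) - (i : ℕ) := by omega
    have hd : ((i : ℕ) : ℝ) - ((j : ℕ) : ℝ) = -((((j : ℕ) - (i : ℕ) : ℕ)) : ℝ) := by
      rw [Nat.cast_sub h.le]; ring
    rw [hd]
    have hc : (((j : ℕ) - (i : ℕ) - 1 : ℕ) : ℝ) = (((j : ℕ) - (i : ℕ) : ℕ) : ℝ) - 1 := by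
      rw [Nat.cast_sub he]; norm_num
    rw [hc]
    set e : ℝ := (((j : ℕ) - (i : ℕ) : ℕ) : ℝ) with hee
    have he1 : (1:ℝ) ≤ e := by rw [hee]; exact_mod_cast he
    have : 1 + 2 * (-e) = -(2 * (e - 1) + 1) := by ring
    rw [this, div_neg, abs_neg, abs_of_pos (div_pos two_pos (by linarith))]

lemma entry_rpow {p : ℝ} {n : ℕ} (i j : Fin n) :
    |cauchyToeplitz n i j| ^ p = cfun p (idx i j) := by
  rw [abs_entry, cfun, Real.div_rpow (by norm_num) (by positivity)]

lemma lpNorm_eq (p : ℝ) (n : ℕ) : lpNorm n p = (Sfun p n) ^ (1 / p) := by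
  unfold lpNorm Sfun
  congr 1
  have h1 : ∀ i : Fin n, ∑ j : Fin n, |cauchyToeplitz n i j| ^ p
      = ∑ j ∈ Finset.range n, cfun p (idx (i : ℕ) j) := by
    intro i
    rw [Finset.sum_congr rfl (fun j _ => entry_rpow i j)]
    exact Fin.sum_univ_eq_sum_range (fun j => cfun p (idx (i : ℕ) j)) n
  rw [Finset.sum_congr rfl (fun i _ => h1 i)]
  exact Fin.sum_univ_eq_sum_range (fun i => ∑ j ∈ Finset.range n, cfun p (idx i j)) n

lemma Sfun_succ (p : ℝ) (n : ℕ) :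
    Sfun p (n+1) = Sfun p n + tfun p n + tfun p (n+1) := by
  unfold Sfun tfun
  rw [Finset.sum_range_succ]
  have hrow : ∀ i ∈ Finset.range n, ∑ j ∈ Finset.range (n+1), cfun p (idx i j)
      = ∑ j ∈ Finset.range n, cfun p (idx i j) + cfun p (n - i - 1) := by
    intro i hi
    rw [Finset.sum_range_succ]
    congr 1
    unfold idx
    rw [if_neg (by simp at hi; omega)]
  rw [Finset.sum_congr rfl hrow, Finset.sum_add_distrib]
  have hlast : ∑ j ∈ Finset.range (n+1), cfun p (idx n j)
      = ∑ j ∈ Finset.range (n+1), cfun p (n - j) := by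
    refine Finset.sum_congr rfl fun j hj => ?_
    simp only [Finset.mem_range] at hj
    unfold idx; rw [if_pos (by omega)]
  rw [hlast]
  have h1 : ∑ i ∈ Finset.range n, cfun p (n - i - 1) = ∑ i ∈ Finset.range n, cfun p i := by
    have h := Finset.sum_range_reflect (fun i => cfun p i) n
    rw [← h]
    exact Finset.sum_congr rfl fun i hi => by rw [Nat.sub_right_comm]
  have h2 : ∑ j ∈ Finset.range (n+1), cfun p (n - j) = ∑ j ∈ Finset.range (n+1), cfun p j := by
    simpa using Finset.sum_range_reflect (fun i => cfun p i) (n+1)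
  rw [h1, h2]

lemma Sfun_eq (p : ℝ) (n : ℕ) :
    Sfun p n = ∑ k ∈ Finset.range n, (tfun p k + tfun p (k+1)) := by
  induction n with
  | zero => simp [Sfun]
  | succ n ih => rw [Finset.sum_range_succ, ← ih, Sfun_succ]; ring

lemma tfun_nonneg (p : ℝ) (n : ℕ) : 0 ≤ tfun p n :=
  Finset.sum_nonneg fun d _ => (cfun_pos d).le

lemma tfun_lt {p : ℝ} (hp : 1 < p) (k : ℕ) : tfun p k < ∑' d, cfun p d := by
  have h1 : tfun p k < tfun p (k+1) := by
    rw [tfun, tfun, Finset.sum_range_succ]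
    exact lt_add_of_pos_right _ (cfun_pos k)
  have h2 : tfun p (k+1) ≤ ∑' d, cfun p d :=
    Summable.sum_le_tsum (Finset.range (k+1)) (fun d _ => (cfun_pos d).le) (summable_cfun hp)
  linarith

lemma tfun_ge (p : ℝ) (k : ℕ) : 2 ^ p ≤ tfun p (k+1) := by
  rw [← cfun_zero p]
  exact Finset.single_le_sum (f := cfun p) (fun d _ => (cfun_pos d).le)
    (Finset.mem_range.mpr (Nat.succ_pos k))

lemma key_eq {p : ℝ} (hp : 1 < p) {n : ℕ} (hn : 1 ≤ n) :
    (n : ℝ) ^ (-(1 / p)) * lpNorm n p = (Sfun p n / n) ^ (1 / p) := by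
  have hn0 : (0:ℝ) < n := by exact_mod_cast hn
  have hS : 0 ≤ Sfun p n := by
    refine Finset.sum_nonneg fun i _ => Finset.sum_nonneg fun j _ => (cfun_pos _).le
  rw [lpNorm_eq, Real.div_rpow hS hn0.le, Real.rpow_neg hn0.le]
  ring

theorem stmt_3 (p : ℝ) (hp : 1 < p) :
    Tendsto (fun n : ℕ => (n : ℝ) ^ (-(1 / p)) * lpNorm n p) atTop
      (nhds (2 ^ (1 / p) * ((2 ^ p - 1) * zetaR p) ^ (1 / p))) ∧
    ∀ n : ℕ, 1 ≤ n →
      2 ≤ (n : ℝ) ^ (-(1 / p)) * lpNorm n p ∧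
      (n : ℝ) ^ (-(1 / p)) * lpNorm n p < 2 ^ (1 / p) * ((2 ^ p - 1) * zetaR p) ^ (1 / p) := by
  have hp0 : (0:ℝ) < p := by linarith
  have hp1 : (0:ℝ) < 1 / p := by positivity
  set T : ℝ := ∑' d, cfun p d with hTdef
  have hT : T = (2 ^ p - 1) * zetaR p := tsum_cfun_eq hp
  have hTpos : 0 < T := by
    have := tfun_lt hp 0
    simpa [tfun] using this
  have htarget : 2 ^ (1 / p) * ((2 ^ p - 1) * zetaR p) ^ (1 / p) = (T + T) ^ (1 / p) := by
    rw [← hT, ← two_mul, Real.mul_rpow (by norm_num) hTpos.le]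
  -- the limit
  have h1 : Tendsto (fun n => tfun p n) atTop (nhds T) :=
    (summable_cfun hp).hasSum.tendsto_sum_nat
  have h2 : Tendsto (fun n => tfun p (n+1)) atTop (nhds T) :=
    (tendsto_add_atTop_iff_nat 1).mpr h1
  have hu : Tendsto (fun k => tfun p k + tfun p (k+1)) atTop (nhds (T + T)) := h1.add h2
  have hces := hu.cesaro
  have hces' : Tendsto (fun n : ℕ => Sfun p n / n) atTop (nhds (T + T)) := by
    refine hces.congr fun n => ?_
    rw [← Sfun_eq, inv_mul_eq_div]
  have hrp : Tendsto (fun n : ℕ => (Sfun p n / n) ^ (1 / p)) atTop (nhds ((T + T) ^ (1 / p))) :=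
    hces'.rpow_const (Or.inr hp1.le)
  constructor
  · rw [htarget]
    refine hrp.congr' ?_
    filter_upwards [eventually_ge_atTop 1] with n hn
    exact (key_eq hp hn).symm
  · intro n hn
    have hn0 : (0:ℝ) < n := by exact_mod_cast hn
    rw [key_eq hp hn, htarget]
    have hSeq := Sfun_eq p n
    constructor
    · -- lower bound
      have hlow : (n : ℝ) * 2 ^ p ≤ Sfun p n := by
        rw [hSeq]
        calc (n : ℝ) * 2 ^ p = ∑ _k ∈ Finset.range n, (2:ℝ) ^ p := by
              rw [Finset.sum_const, Finset.card_range, nsmul_eq_mul]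
          _ ≤ _ := Finset.sum_le_sum fun k _ => by
              have := tfun_ge p k
              have := tfun_nonneg p k
              linarith
      have hdiv : (2:ℝ) ^ p ≤ Sfun p n / n := by
        rw [le_div_iff₀ hn0]
        linarith [hlow]
      calc (2:ℝ) = ((2:ℝ) ^ p) ^ (1/p) := by
            rw [← Real.rpow_mul (by norm_num), mul_one_div_cancel hp0.ne', Real.rpow_one]
        _ ≤ (Sfun p n / n) ^ (1/p) :=
            Real.rpow_le_rpow (by positivity) hdiv hp1.le
    · -- strict upper bound
      have hupp : Sfun p n < (n : ℝ) * (T + T) := by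
        rw [hSeq]
        calc ∑ k ∈ Finset.range n, (tfun p k + tfun p (k+1))
            < ∑ _k ∈ Finset.range n, (T + T) :=
              Finset.sum_lt_sum_of_nonempty (Finset.nonempty_range_iff.mpr (by omega))
                (fun k _ => add_lt_add (tfun_lt hp k) (tfun_lt hp (k+1)))
          _ = (n : ℝ) * (T + T) := by
              rw [Finset.sum_const, Finset.card_range, nsmul_eq_mul]
      have hdiv : Sfun p n / n < T + T := by
        rw [div_lt_iff₀ hn0]
        linarith [hupp]
      have hSnn : 0 ≤ Sfun p n / n := by
        have hS : 0 ≤ Sfun p n :=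
          Finset.sum_nonneg fun i _ => Finset.sum_nonneg fun j _ => (cfun_pos _).le
        positivity
      exact Real.rpow_lt_rpow hSnn hdiv hp1
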